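/- In the global-preferences market, for any agent p_i and arm a_ℓ with ℓ > i, every achievable non-truly-stable matching in which p_i is matched to a_ℓ is blocked by some triplet (p_i, a_k, a_ℓ) with 1 ≤ k ≤ i; i.e., the set of triplets {(p_i, a_k, a_ℓ) : k ≤ i} covers M_{i,ℓ}. -/
import Mathlib


/-- in the global-preferences market (all agents rank `a_1 ≻ ⋯ ≻ a_K`, all
arms rank `p_1 ≻ ⋯ ≻ p_N`), every matching in which agent `p_i` is matched to an arm `a_ℓ`
with `ℓ > i` is blocked by some triplet `(p_i, a_k, a_ℓ)` with `k ≤ i`: agent `p_i` prefers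
`a_k` to `a_ℓ` and arm `a_k` is unmatched or matched to an agent ranked below `p_i`. -/
theorem global_preferences_cover
    (N K : ℕ) (hNK : N ≤ K)
    (μ : Fin N → Fin K → ℝ)
    (hglobal : ∀ (i : Fin N) (j j' : Fin K), j < j' → μ i j' < μ i j)
    (armRank : Fin K → Fin N → ℕ)
    (harm : ∀ (j : Fin K) (i : Fin N), armRank j i = (i : ℕ))
    (m : Fin N → Fin K) (hmInj : Function.Injective m)
    (i : Fin N) (ℓ : Fin K) (hmi : m i = ℓ) (hil : (i : ℕ) < (ℓ : ℕ)) :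
    ∃ k : Fin K, (k : ℕ) ≤ (i : ℕ) ∧ μ i ℓ < μ i k ∧
      ((∀ i', m i' ≠ k) ∨ ∃ i', m i' = k ∧ armRank k i < armRank k i') := by
  by_contra hcon
  push_neg at hcon
  -- For each j ≤ i, the arm a_j as a Fin K
  have hjK : ∀ j : Fin ((i : ℕ) + 1), (j : ℕ) < K := fun j =>
    lt_of_le_of_lt (Nat.lt_succ_iff.mp j.isLt) (lt_of_lt_of_le hil (Nat.le_of_lt_succ
      (Nat.lt_succ_of_lt ℓ.isLt)))
  -- each such arm is matched to some agent with index < i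
  have key : ∀ j : Fin ((i : ℕ) + 1), ∃ i' : Fin N, m i' = ⟨(j : ℕ), hjK j⟩ ∧ (i' : ℕ) < (i : ℕ) := by
    intro j
    set k : Fin K := ⟨(j : ℕ), hjK j⟩ with hk
    have hki : (k : ℕ) ≤ (i : ℕ) := Nat.lt_succ_iff.mp j.isLt
    have hpref : μ i ℓ < μ i k := hglobal i k ℓ (by
      show (k : ℕ) < (ℓ : ℕ); exact lt_of_le_of_lt hki hil)
    obtain ⟨⟨i', hmi'⟩, hrank⟩ := hcon k hki hpref
    refine ⟨i', hmi', ?_⟩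
    have hne : i' ≠ i := by
      intro h; rw [h, hmi] at hmi'
      have : (ℓ : ℕ) = (k : ℕ) := congrArg Fin.val hmi'
      omega
    have := hrank i' hmi'
    rw [harm, harm] at this
    exact lt_of_le_of_ne this (fun h => hne (Fin.ext h))
  choose f hf hflt using key
  -- f is injective from Fin (i+1) into {agents with index < i}
  have hginj : Function.Injective (fun j : Fin ((i : ℕ) + 1) => (⟨(f j : ℕ), hflt j⟩ : Fin (i : ℕ))) := by
    intro a b hab
    simp only [Fin.mk.injEq] at hab
    have hfab : f a = f b := Fin.ext hab
    have h2 : (⟨(a : ℕ), hjK a⟩ : Fin K) = ⟨(b : ℕ), hjK b⟩ := by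
      rw [← hf a, ← hf b, hfab]
    simp only [Fin.mk.injEq] at h2
    exact Fin.ext h2
  have := Fintype.card_le_of_injective _ hginj
  simp at this
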